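/- arXiv:2011.13815 — 3 statements merged into one kernel-verified Lean document; each statement's English description precedes it below -/
import Mathlib

section
/- If N ∼ Bin(n, p), then E|N + 1 - N^s| = p, where N^s is the size-biased version of N coupled so that N + 1 is stochastically larger than N^s; equivalently E[N+1] - E[N^s] = p and there exists a coupling achieving E|N+1-N^s| = p. -/
open MeasureTheory ProbabilityTheory
open scoped ENNReal


lemma aux0 (x y : ℝ) (h : x + y = 1) (m : ℕ) :
    ∑ k ∈ Finset.range (m+1), (m.choose k : ℝ) * x^k * y^(m-k) = 1 := by
  have := add_pow x y m
  rw [h, one_pow] at this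
  rw [this]
  exact Finset.sum_congr rfl (fun k _ => by ring)

lemma aux1 (x y : ℝ) (h : x + y = 1) (m : ℕ) :
    ∑ k ∈ Finset.range (m+1), (k : ℝ) * (m.choose k : ℝ) * x^k * y^(m-k) = m * x := by
  cases m with
  | zero => simp
  | succ m' =>
    rw [Finset.sum_range_succ']
    have hterm : ∀ k, ((k+1 : ℕ) : ℝ) * ((m'+1).choose (k+1) : ℝ) * x^(k+1) * y^((m'+1)-(k+1))
        = ((m'+1 : ℕ) : ℝ) * x * ((m'.choose k : ℝ) * x^k * y^(m'-k)) := by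
      intro k
      have hnat : (m'+1) * m'.choose k = (m'+1).choose (k+1) * (k+1) :=
        Nat.add_one_mul_choose_eq m' k
      have hc : ((m'+1 : ℕ) : ℝ) * (m'.choose k : ℝ) = ((m'+1).choose (k+1) : ℝ) * ((k+1 : ℕ) : ℝ) := by
        exact_mod_cast congrArg (Nat.cast : ℕ → ℝ) hnat
      have hsub : (m'+1) - (k+1) = m' - k := by omega
      rw [hsub]
      push_cast at hc ⊢
      calc (↑k + 1) * ↑((m'+1).choose (k+1)) * x^(k+1) * y^(m'-k)
          = (↑((m'+1).choose (k+1)) * (↑k + 1)) * x^(k+1) * y^(m'-k) := by ring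
        _ = ((↑m' + 1) * ↑(m'.choose k)) * x^(k+1) * y^(m'-k) := by rw [← hc]
        _ = (↑m' + 1) * x * (↑(m'.choose k) * x^k * y^(m'-k)) := by ring
    calc (∑ k ∈ Finset.range (m'+1), ((k+1 : ℕ) : ℝ) * ((m'+1).choose (k+1) : ℝ) * x^(k+1) * y^((m'+1)-(k+1)))
          + ((0:ℕ) : ℝ) * ((m'+1).choose 0 : ℝ) * x^0 * y^((m'+1)-0)
        = ∑ k ∈ Finset.range (m'+1), ((m'+1 : ℕ) : ℝ) * x * ((m'.choose k : ℝ) * x^k * y^(m'-k)) := by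
          rw [Finset.sum_congr rfl (fun k _ => hterm k)]; push_cast; ring
      _ = ((m'+1 : ℕ) : ℝ) * x * ∑ k ∈ Finset.range (m'+1), (m'.choose k : ℝ) * x^k * y^(m'-k) := by
          rw [Finset.mul_sum]
      _ = ((m'+1 : ℕ) : ℝ) * x := by rw [aux0 x y h m', mul_one]


lemma nat_int_helper {Ω : Type*} [MeasurableSpace Ω] (μ : Measure Ω) [IsProbabilityMeasure μ]
    (f : Ω → ℕ) (hf : Measurable f) (n : ℕ) (h0 : ∀ k, n < k → μ {ω | f ω = k} = 0) :
    Integrable (fun ω => (f ω : ℝ)) μ ∧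
    ∫ ω, (f ω : ℝ) ∂μ = ∑ k ∈ Finset.range (n+1), (k : ℝ) * (μ {ω | f ω = k}).toReal := by
  set g : Ω → ℝ := fun ω => ∑ k ∈ Finset.range (n+1),
    Set.indicator {ω | f ω = k} (fun _ => (k:ℝ)) ω with hg
  have hmeas : ∀ k : ℕ, MeasurableSet {ω | f ω = k} := fun k => hf (measurableSet_singleton k)
  have hintk : ∀ k : ℕ, Integrable (Set.indicator {ω | f ω = k} (fun _ => (k:ℝ))) μ := by
    intro k
    exact (integrable_indicator_iff (hmeas k)).2
      (integrableOn_const (measure_ne_top μ _))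
  have hgint : Integrable g μ := integrable_finset_sum _ (fun k _ => hintk k)
  have hbad : μ {ω | n < f ω} = 0 := by
    have : {ω | n < f ω} ⊆ ⋃ k : ℕ, {ω | f ω = n + 1 + k} := by
      intro ω hω
      simp only [Set.mem_setOf_eq] at hω
      exact Set.mem_iUnion.2 ⟨f ω - (n+1), by simp only [Set.mem_setOf_eq]; omega⟩
    refine measure_mono_null this ?_
    refine measure_iUnion_null (fun k => h0 _ (by omega))
  have hae : (fun ω => (f ω : ℝ)) =ᵐ[μ] g := by
    have hle : ∀ᵐ ω ∂μ, f ω ≤ n := by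
      rw [ae_iff]
      convert hbad using 2
      ext ω; simp only [Set.mem_setOf_eq, not_le]
    filter_upwards [hle] with ω hω
    simp only [hg, Set.indicator_apply, Set.mem_setOf_eq]
    rw [show (∑ k ∈ Finset.range (n+1), if f ω = k then (k:ℝ) else 0)
        = if f ω ∈ Finset.range (n+1) then ((f ω : ℕ):ℝ) else 0 from
      Finset.sum_ite_eq (Finset.range (n+1)) (f ω) (fun k => (k:ℝ))]
    simp [Finset.mem_range, Nat.lt_succ_iff, hω]
  have hfint : Integrable (fun ω => (f ω : ℝ)) μ := hgint.congr hae.symm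
  refine ⟨hfint, ?_⟩
  rw [integral_congr_ae hae, hg, integral_finset_sum _ (fun k _ => hintk k)]
  refine Finset.sum_congr rfl (fun k _ => ?_)
  rw [integral_indicator_const _ (hmeas k), smul_eq_mul, mul_comm, measureReal_def]

lemma aux2 (p : ℝ) (hp : p ≠ 0) (m : ℕ) :
    ∑ j ∈ Finset.range (m+2),
      (j:ℝ) * ((j:ℝ) * (((m+1).choose j : ℝ) * p^j * (1-p)^(m+1-j)) / ((((m+1):ℕ):ℝ)*p))
    = m * p + 1 := by
  have hq : p + (1 - p) = 1 := by ring
  rw [Finset.sum_range_succ']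
  have hterm : ∀ j, ((j+1:ℕ):ℝ) * (((j+1:ℕ):ℝ) * ((((m+1).choose (j+1)) : ℝ) * p^(j+1) * (1-p)^(m+1-(j+1))) / ((((m+1):ℕ):ℝ)*p))
      = (j:ℝ) * (m.choose j : ℝ) * p^j * (1-p)^(m-j) + (m.choose j : ℝ) * p^j * (1-p)^(m-j) := by
    intro j
    have hc : (((m+1):ℕ):ℝ) * (m.choose j : ℝ) = (((m+1).choose (j+1)) : ℝ) * ((j+1:ℕ):ℝ) := by
      exact_mod_cast congrArg (Nat.cast : ℕ → ℝ) (Nat.add_one_mul_choose_eq m j)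
    have hsub : m + 1 - (j + 1) = m - j := by omega
    rw [hsub]
    have hm1 : (((m+1):ℕ):ℝ) ≠ 0 := by push_cast; positivity
    field_simp
    push_cast at hc ⊢
    linear_combination (-(((j:ℝ)+1) * p^(j+1) * (1-p)^(m-j))) * hc
  calc (∑ j ∈ Finset.range (m+1), ((j+1:ℕ):ℝ) * (((j+1:ℕ):ℝ) * ((((m+1).choose (j+1)) : ℝ) * p^(j+1) * (1-p)^(m+1-(j+1))) / ((((m+1):ℕ):ℝ)*p)))
        + ((0:ℕ):ℝ) * (((0:ℕ):ℝ) * ((((m+1).choose 0) : ℝ) * p^0 * (1-p)^(m+1-0)) / ((((m+1):ℕ):ℝ)*p))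
      = ∑ j ∈ Finset.range (m+1), ((j:ℝ) * (m.choose j : ℝ) * p^j * (1-p)^(m-j) + (m.choose j : ℝ) * p^j * (1-p)^(m-j)) := by
        rw [Finset.sum_congr rfl (fun j _ => hterm j)]; push_cast; ring
    _ = (∑ j ∈ Finset.range (m+1), (j:ℝ) * (m.choose j : ℝ) * p^j * (1-p)^(m-j))
        + ∑ j ∈ Finset.range (m+1), (m.choose j : ℝ) * p^j * (1-p)^(m-j) := by
        rw [Finset.sum_add_distrib]
    _ = m * p + 1 := by rw [aux1 p (1-p) hq m, aux0 p (1-p) hq m]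

lemma coupling (m : ℕ) (p : ℝ) (hp0 : 0 < p) (hp1 : p ≤ 1) :
    ∃ (Ω' : Type) (_ : MeasurableSpace Ω') (μ : Measure Ω') (_ : IsProbabilityMeasure μ)
        (M S : Ω' → ℕ), Measurable M ∧ Measurable S
          ∧ (∀ k : ℕ, (μ {ω | M ω = k}).toReal
              = ((m+1).choose k : ℝ) * p ^ k * (1 - p) ^ (m + 1 - k))
          ∧ (∀ j : ℕ, (μ {ω | S ω = j}).toReal
              = j * (μ {ω | M ω = j}).toReal / ∫ ω, (M ω : ℝ) ∂μ)
          ∧ ∫ ω, |(M ω : ℝ) + 1 - (S ω : ℝ)| ∂μ = p := by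
  have hq : p + (1 - p) = 1 := by ring
  have hq0 : 0 ≤ 1 - p := by linarith
  set fR : ℕ × Bool → ℝ := fun yb =>
    (m.choose yb.1 : ℝ) * p^yb.1 * (1-p)^(m - yb.1) * (cond yb.2 p (1-p)) with hfR
  have hfR0 : ∀ yb, 0 ≤ fR yb := by
    rintro ⟨y, b⟩
    cases b
    · show 0 ≤ (m.choose y : ℝ) * p^y * (1-p)^(m-y) * (1-p); positivity
    · show 0 ≤ (m.choose y : ℝ) * p^y * (1-p)^(m-y) * p; positivity
  set fE : ℕ × Bool → ℝ≥0∞ := fun yb => ENNReal.ofReal (fR yb) with hfE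
  set F : Finset (ℕ × Bool) := (Finset.range (m+1)) ×ˢ (Finset.univ : Finset Bool) with hF
  have hout : ∀ yb ∉ F, fE yb = 0 := by
    rintro ⟨y, b⟩ hyb
    have hy : m < y := by
      by_contra hy
      exact hyb (Finset.mem_product.2 ⟨Finset.mem_range.2 (by omega), Finset.mem_univ _⟩)
    have hz : m.choose y = 0 := Nat.choose_eq_zero_of_lt hy
    simp [hfE, hfR, hz]
  have hsumF : ∑ yb ∈ F, fR yb = 1 := by
    rw [hF, Finset.sum_product]
    have hb : ∀ y, ∑ b : Bool, fR (y, b) = (m.choose y : ℝ) * p^y * (1-p)^(m-y) := by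
      intro y
      rw [Fintype.sum_bool]
      show (m.choose y : ℝ) * p^y * (1-p)^(m-y) * p
          + (m.choose y : ℝ) * p^y * (1-p)^(m-y) * (1-p) = _
      ring
    rw [Finset.sum_congr rfl (fun y _ => hb y)]
    exact aux0 p (1-p) hq m
  have htsum : ∑' yb, fE yb = 1 := by
    rw [tsum_eq_sum hout, hfE]
    rw [← ENNReal.ofReal_sum_of_nonneg (fun yb _ => hfR0 yb), hsumF, ENNReal.ofReal_one]
  set Φ : PMF (ℕ × Bool) := ⟨fE, (ENNReal.summable).hasSum_iff.mpr htsum⟩ with hΦ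
  set μ : Measure (ℕ × Bool) := Φ.toMeasure with hμ
  have hprob : IsProbabilityMeasure μ := PMF.toMeasure.isProbabilityMeasure Φ
  set M : ℕ × Bool → ℕ := fun yb => yb.1 + (cond yb.2 1 0) with hMdef
  set S : ℕ × Bool → ℕ := fun yb => yb.1 + 1 with hSdef
  have hsingle : ∀ yb, (μ {yb}).toReal = fR yb := by
    intro yb
    rw [hμ, PMF.toMeasure_apply_singleton _ _ (measurableSet_singleton _)]
    exact ENNReal.toReal_ofReal (hfR0 yb)
  have hM : ∀ k : ℕ, (μ {ω | M ω = k}).toReal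
      = ((m+1).choose k : ℝ) * p ^ k * (1 - p) ^ (m + 1 - k) := by
    intro k
    cases k with
    | zero =>
      have hset : {ω : ℕ × Bool | M ω = 0} = {((0:ℕ), false)} := by
        ext ⟨y, b⟩; cases b <;> simp [hMdef]
      rw [hset, hsingle]
      show (m.choose 0 : ℝ) * p^0 * (1-p)^(m-0) * (1-p)
          = ((m+1).choose 0 : ℝ) * p^0 * (1-p)^(m+1-0)
      simp [pow_succ]
    | succ j =>
      have hset : {ω : ℕ × Bool | M ω = j + 1} = {((j+1:ℕ), false)} ∪ {((j:ℕ), true)} := by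
        ext ⟨y, b⟩; cases b <;> simp [hMdef] <;> omega
      have hdisj : Disjoint ({((j+1:ℕ), false)} : Set (ℕ × Bool)) {((j:ℕ), true)} := by
        simp [Set.disjoint_singleton]
      rw [hset, measure_union hdisj (measurableSet_singleton _)]
      rw [ENNReal.toReal_add (measure_ne_top _ _) (measure_ne_top _ _), hsingle, hsingle]
      have h1 : fR ((j+1:ℕ), false) = (m.choose (j+1) : ℝ) * p^(j+1) * (1-p)^(m-j) := by
        show (m.choose (j+1) : ℝ) * p^(j+1) * (1-p)^(m-(j+1)) * (1-p) = _
        by_cases hj : j + 1 ≤ m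
        · have he : m - j = m - (j+1) + 1 := by omega
          rw [he]; ring
        · have hz : m.choose (j+1) = 0 := Nat.choose_eq_zero_of_lt (by omega)
          simp [hz]
      have h2 : fR ((j:ℕ), true) = (m.choose j : ℝ) * p^(j+1) * (1-p)^(m-j) := by
        show (m.choose j : ℝ) * p^j * (1-p)^(m-j) * p = _
        rw [pow_succ]; ring
      have hpascal : (m+1).choose (j+1) = m.choose j + m.choose (j+1) := Nat.choose_succ_succ m j
      have hsub : m + 1 - (j + 1) = m - j := by omega
      rw [h1, h2, hpascal, hsub]
      push_cast
      ring
  have hMzero : ∀ k, m + 1 < k → μ {ω | M ω = k} = 0 := by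
    intro k hk
    have h1 : (μ {ω | M ω = k}).toReal = 0 := by
      rw [hM k, Nat.choose_eq_zero_of_lt hk]; simp
    rcases (ENNReal.toReal_eq_zero_iff _).mp h1 with h | h
    · exact h
    · exact absurd h (measure_ne_top _ _)
  have hMmeas : Measurable M := measurable_of_countable M
  have hSmeas : Measurable S := measurable_of_countable S
  obtain ⟨hMint, hEM⟩ := nat_int_helper μ M hMmeas (m+1) hMzero
  have hEMval : ∫ ω, (M ω : ℝ) ∂μ = (((m+1):ℕ):ℝ) * p := by
    rw [hEM]
    rw [Finset.sum_congr rfl (fun k _ => by rw [hM k]; ring :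
      ∀ k ∈ Finset.range (m+1+1), (k : ℝ) * (μ {ω | M ω = k}).toReal
        = (k : ℝ) * ((m+1).choose k : ℝ) * p^k * (1-p)^((m+1)-k))]
    exact aux1 p (1-p) hq (m+1)
  have hS : ∀ j : ℕ, (μ {ω | S ω = j}).toReal
      = j * (μ {ω | M ω = j}).toReal / ∫ ω, (M ω : ℝ) ∂μ := by
    intro j
    rw [hEMval, hM j]
    cases j with
    | zero =>
      have hset : {ω : ℕ × Bool | S ω = 0} = ∅ := by
        ext ⟨y, b⟩; simp [hSdef]
      rw [hset]
      simp
    | succ k =>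
      have hset : {ω : ℕ × Bool | S ω = k + 1} = {((k:ℕ), true)} ∪ {((k:ℕ), false)} := by
        ext ⟨y, b⟩; cases b <;> simp [hSdef]
      have hdisj : Disjoint ({((k:ℕ), true)} : Set (ℕ × Bool)) {((k:ℕ), false)} := by
        simp [Set.disjoint_singleton]
      rw [hset, measure_union hdisj (measurableSet_singleton _)]
      rw [ENNReal.toReal_add (measure_ne_top _ _) (measure_ne_top _ _), hsingle, hsingle]
      have hc : (((m+1):ℕ):ℝ) * (m.choose k : ℝ) = (((m+1).choose (k+1)) : ℝ) * ((k+1:ℕ):ℝ) := by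
        exact_mod_cast congrArg (Nat.cast : ℕ → ℝ) (Nat.add_one_mul_choose_eq m k)
      have hsub : m + 1 - (k + 1) = m - k := by omega
      rw [hsub]
      show (m.choose k : ℝ) * p^k * (1-p)^(m-k) * p + (m.choose k : ℝ) * p^k * (1-p)^(m-k) * (1-p)
        = ((k+1:ℕ):ℝ) * ((((m+1).choose (k+1)) : ℝ) * p^(k+1) * (1-p)^(m-k)) / ((((m+1):ℕ):ℝ) * p)
      have hm1 : (((m+1):ℕ):ℝ) ≠ 0 := by push_cast; positivity
      rw [eq_div_iff (by positivity)]
      push_cast at hc ⊢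
      linear_combination (p^(k+1) * (1-p)^(m-k)) * hc
  have hAbs : ∫ ω, |(M ω : ℝ) + 1 - (S ω : ℝ)| ∂μ = p := by
    have hind : (fun ω : ℕ × Bool => |(M ω : ℝ) + 1 - (S ω : ℝ)|)
        = Set.indicator {yb : ℕ × Bool | yb.2 = true} (fun _ => (1:ℝ)) := by
      funext ⟨y, b⟩
      cases b <;> simp [hMdef, hSdef, Set.indicator] <;> push_cast <;> simp [abs_of_nonneg]
    have hmeasA : MeasurableSet {yb : ℕ × Bool | yb.2 = true} :=
      measurable_snd (measurableSet_singleton true)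
    rw [hind, integral_indicator_const (1:ℝ) hmeasA, smul_eq_mul, mul_one]
    have hμA : μ {yb : ℕ × Bool | yb.2 = true} = ENNReal.ofReal p := by
      rw [hμ, PMF.toMeasure_apply _ hmeasA]
      set F' : Finset (ℕ × Bool) := (Finset.range (m+1)) ×ˢ ({true} : Finset Bool) with hF'
      have hout' : ∀ yb ∉ F', Set.indicator {yb : ℕ × Bool | yb.2 = true} (⇑Φ) yb = 0 := by
        rintro ⟨y, b⟩ hyb
        cases b with
        | false => simp [Set.indicator]
        | true =>
          have hy : m < y := by
            by_contra hy
            exact hyb (Finset.mem_product.2 ⟨Finset.mem_range.2 (by omega), by simp⟩)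
          have hz : m.choose y = 0 := Nat.choose_eq_zero_of_lt hy
          rw [Set.indicator_of_mem (by simp : ((y, true) : ℕ × Bool) ∈ {yb : ℕ × Bool | yb.2 = true})]
          show fE (y, true) = 0
          simp [hfE, hfR, hz]
      rw [tsum_eq_sum hout']
      have hin : ∀ yb ∈ F', Set.indicator {yb : ℕ × Bool | yb.2 = true} (⇑Φ) yb
          = ENNReal.ofReal (fR yb) := by
        rintro ⟨y, b⟩ hyb
        have hb : b = true := by
          rcases Finset.mem_product.1 hyb with ⟨_, hbb⟩
          simpa using hbb
        subst hb
        rw [Set.indicator_of_mem (by simp : ((y, true) : ℕ × Bool) ∈ {yb : ℕ × Bool | yb.2 = true})]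
        rfl
      rw [Finset.sum_congr rfl hin, ← ENNReal.ofReal_sum_of_nonneg (fun yb _ => hfR0 yb)]
      congr 1
      rw [hF', Finset.sum_product]
      have hbt : ∀ y ∈ Finset.range (m+1), (∑ b ∈ ({true} : Finset Bool), fR (y, b))
          = p * ((m.choose y : ℝ) * p^y * (1-p)^(m-y)) := by
        intro y _
        rw [Finset.sum_singleton]
        show (m.choose y : ℝ) * p^y * (1-p)^(m-y) * p = _
        ring
      rw [Finset.sum_congr rfl hbt, ← Finset.mul_sum, aux0 p (1-p) hq m, mul_one]
    rw [measureReal_def, hμA, ENNReal.toReal_ofReal (le_of_lt hp0)]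
  exact ⟨ℕ × Bool, inferInstance, μ, hprob, M, S, hMmeas, hSmeas, hM, hS, hAbs⟩

/-- For `N ∼ Bin(n,p)`: `E[N+1] - E[N^s] = p`, and there is a coupling of `N+1` and `N^s`
achieving `E|N+1-N^s| = p`. -/
theorem sizeBiased_binomial_coupling
    {Ω : Type*} [MeasureSpace Ω] [IsProbabilityMeasure (ℙ : Measure Ω)]
    (n : ℕ) (hn : 1 ≤ n) (p : ℝ) (hp0 : 0 < p) (hp1 : p ≤ 1)
    (N Ns : Ω → ℕ) (hN : Measurable N) (hNs : Measurable Ns)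
    (hbin : ∀ k : ℕ, (ℙ {ω | N ω = k}).toReal = (n.choose k : ℝ) * p ^ k * (1 - p) ^ (n - k))
    (hsize : ∀ j : ℕ, (ℙ {ω | Ns ω = j}).toReal
      = j * (ℙ {ω | N ω = j}).toReal / ∫ ω, (N ω : ℝ) ∂ℙ) :
    ((∫ ω, ((N ω : ℝ) + 1) ∂ℙ) - (∫ ω, (Ns ω : ℝ) ∂ℙ) = p)
    ∧ ∃ (Ω' : Type) (_ : MeasurableSpace Ω') (μ : Measure Ω') (_ : IsProbabilityMeasure μ)
        (M S : Ω' → ℕ), Measurable M ∧ Measurable S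
          ∧ (∀ k : ℕ, (μ {ω | M ω = k}).toReal
              = (n.choose k : ℝ) * p ^ k * (1 - p) ^ (n - k))
          ∧ (∀ j : ℕ, (μ {ω | S ω = j}).toReal
              = j * (μ {ω | M ω = j}).toReal / ∫ ω, (M ω : ℝ) ∂μ)
          ∧ ∫ ω, |(M ω : ℝ) + 1 - (S ω : ℝ)| ∂μ = p := by
  have hq : p + (1 - p) = 1 := by ring
  obtain ⟨m, rfl⟩ : ∃ m, n = m + 1 := ⟨n - 1, by omega⟩
  refine ⟨?_, coupling m p hp0 hp1⟩
  have hzero : ∀ {s : Set Ω}, ((ℙ : Measure Ω) s).toReal = 0 → (ℙ : Measure Ω) s = 0 := by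
    intro s hs
    rcases (ENNReal.toReal_eq_zero_iff _).mp hs with h | h
    · exact h
    · exact absurd h (measure_ne_top _ _)
  have hprobN0 : ∀ k, m + 1 < k → (ℙ : Measure Ω) {ω | N ω = k} = 0 := by
    intro k hk
    refine hzero ?_
    rw [hbin k, Nat.choose_eq_zero_of_lt hk]; simp
  obtain ⟨hNint, hEN⟩ := nat_int_helper ℙ N hN (m+1) hprobN0
  have hENval : ∫ ω, (N ω : ℝ) ∂ℙ = (((m+1):ℕ):ℝ) * p := by
    rw [hEN]
    rw [Finset.sum_congr rfl (fun k _ => by rw [hbin k]; ring :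
      ∀ k ∈ Finset.range (m+1+1), (k : ℝ) * ((ℙ : Measure Ω) {ω | N ω = k}).toReal
        = (k : ℝ) * ((m+1).choose k : ℝ) * p^k * (1-p)^((m+1)-k))]
    exact aux1 p (1-p) hq (m+1)
  have hprobNs0 : ∀ j, m + 1 < j → (ℙ : Measure Ω) {ω | Ns ω = j} = 0 := by
    intro j hj
    refine hzero ?_
    rw [hsize j, hbin j, Nat.choose_eq_zero_of_lt hj]; simp
  obtain ⟨hNsint, hENs⟩ := nat_int_helper ℙ Ns hNs (m+1) hprobNs0
  have hENsval : ∫ ω, (Ns ω : ℝ) ∂ℙ = (m:ℝ) * p + 1 := by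
    rw [hENs]
    rw [Finset.sum_congr rfl (fun j _ => by rw [hsize j, hbin j, hENval] :
      ∀ j ∈ Finset.range (m+1+1), (j : ℝ) * ((ℙ : Measure Ω) {ω | Ns ω = j}).toReal
        = (j:ℝ) * ((j:ℝ) * (((m+1).choose j : ℝ) * p^j * (1-p)^(m+1-j)) / ((((m+1):ℕ):ℝ)*p)))]
    exact aux2 p (ne_of_gt hp0) m
  have hsum : ∫ ω, ((N ω : ℝ) + 1) ∂ℙ = (((m+1):ℕ):ℝ) * p + 1 := by
    rw [integral_add hNint (integrable_const 1), hENval, integral_const]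
    simp
  rw [hsum, hENsval]
  push_cast
  ring
end

section
/- If Λ is a positive random variable with finite second moment and N ∼ Po(Λ) is a mixed Poisson random variable, then the size-biased version satisfies N^s - 1 ∼ Po(Λ^s), where Λ^s is the size-biased version of Λ. -/
open MeasureTheory ProbabilityTheory
open scoped ENNReal NNReal

lemma hasSum_exp_real (x : ℝ) : HasSum (fun n : ℕ => x ^ n / n.factorial) (Real.exp x) := by
  have h := (Real.summable_pow_div_factorial x).hasSum
  have : ∑' n : ℕ, x ^ n / n.factorial = Real.exp x := by
    rw [Real.exp_eq_exp_ℝ, NormedSpace.exp_eq_tsum_div]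
  rwa [this] at h

lemma pois_le_one (x : ℝ) (hx : 0 ≤ x) (k : ℕ) :
    Real.exp (-x) * x ^ k / k.factorial ≤ 1 := by
  have h1 : x ^ k / k.factorial ≤ Real.exp x :=
    le_hasSum (hasSum_exp_real x) k (fun j _ => by positivity)
  have heq : Real.exp (-x) * x ^ k / k.factorial = (x ^ k / k.factorial) * Real.exp (-x) := by
    ring
  rw [heq]
  calc (x ^ k / k.factorial) * Real.exp (-x) ≤ Real.exp x * Real.exp (-x) :=
        mul_le_mul_of_nonneg_right h1 (Real.exp_pos _).le
    _ = 1 := by rw [← Real.exp_add]; simp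

lemma hasSum_mul_pois (x : ℝ) :
    HasSum (fun k : ℕ => (k : ℝ) * (Real.exp (-x) * x ^ k / k.factorial)) x := by
  have h := (hasSum_exp_real x).mul_left (x * Real.exp (-x))
  have h2 : HasSum (fun n : ℕ =>
      (fun k : ℕ => (k : ℝ) * (Real.exp (-x) * x ^ k / k.factorial)) (n + 1))
      (x * Real.exp (-x) * Real.exp x) := by
    refine (congrArg (HasSum · _) (?_ : _ = fun i : ℕ => x * Real.exp (-x) * (x ^ i / (i.factorial : ℝ)))).mpr h
    funext n
    have hfac : ((n+1).factorial : ℝ) = ((n:ℝ)+1) * n.factorial := by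
      rw [Nat.factorial_succ]; push_cast; ring
    have hn : ((n:ℝ)+1) ≠ 0 := by positivity
    have hf : (n.factorial : ℝ) ≠ 0 := by positivity
    push_cast [hfac]
    field_simp
    ring
  have h3 := (hasSum_nat_add_iff
    (f := fun k : ℕ => (k : ℝ) * (Real.exp (-x) * x ^ k / k.factorial)) 1).mp h2
  have hx1 : x * Real.exp (-x) * Real.exp x = x := by
    rw [mul_assoc, ← Real.exp_add]; simp
  rw [hx1] at h3
  simpa using h3

/-- For a mixed Poisson `N ∼ Po(Λ)`, the size-biased version satisfies
`N^s - 1 ∼ Po(Λ^s)` where `Λ^s` is the size-biased version of `Λ`. -/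
theorem sizeBiased_mixedPoisson
    {Ω : Type*} [MeasureSpace Ω] [IsProbabilityMeasure (ℙ : Measure Ω)]
    (Lam Lams : Ω → ℝ) (hLam : Measurable Lam) (hLams : Measurable Lams)
    (hLpos : ∀ᵐ ω ∂ℙ, 0 < Lam ω) (hL2 : MemLp Lam 2 ℙ)
    (N Ns : Ω → ℕ) (hN : Measurable N) (hNs : Measurable Ns)
    (hmp : ∀ k : ℕ, (ℙ {ω | N ω = k}).toReal
      = ∫ ω, Real.exp (-Lam ω) * Lam ω ^ k / (Nat.factorial k) ∂ℙ)
    (hNsize : ∀ j : ℕ, (ℙ {ω | Ns ω = j}).toReal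
      = j * (ℙ {ω | N ω = j}).toReal / ∫ ω, (N ω : ℝ) ∂ℙ)
    (hLsize : ∀ g : ℝ → ℝ, Measurable g → Integrable (fun ω => g (Lams ω)) ℙ →
      Integrable (fun ω => Lam ω * g (Lam ω)) ℙ →
      ∫ ω, g (Lams ω) ∂ℙ = (∫ ω, Lam ω * g (Lam ω) ∂ℙ) / ∫ ω, Lam ω ∂ℙ) :
    ∀ k : ℕ, (ℙ {ω | Ns ω - 1 = k}).toReal
      = ∫ ω, Real.exp (-Lams ω) * Lams ω ^ k / (Nat.factorial k) ∂ℙ := by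
  have hΛint : Integrable Lam ℙ := hL2.integrable (by norm_num)
  set fk : ℕ → Ω → ℝ := fun k ω => Real.exp (-Lam ω) * Lam ω ^ k / (Nat.factorial k) with hfk
  have hfk_meas : ∀ k, Measurable (fk k) := fun k =>
    ((hLam.neg.exp.mul (hLam.pow_const k)).div_const _)
  have hfk_nonneg : ∀ k, ∀ᵐ ω ∂ℙ, 0 ≤ fk k ω := fun k =>
    hLpos.mono fun ω hω => by positivity
  have hfk_le_one : ∀ k, ∀ᵐ ω ∂ℙ, fk k ω ≤ 1 := fun k =>
    hLpos.mono fun ω hω => pois_le_one _ hω.le k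
  have hfk_int : ∀ k, Integrable (fk k) ℙ := fun k => by
    refine Integrable.mono' (integrable_const 1) (hfk_meas k).aestronglyMeasurable ?_
    filter_upwards [hfk_nonneg k, hfk_le_one k] with ω h0 h1
    rw [Real.norm_eq_abs, abs_of_nonneg h0]; exact h1
  -- Step 1 : E[N] = E[Λ]
  have hNcast : Measurable (fun ω => (N ω : ℝ)) := (measurable_of_countable _).comp hN
  have hL_nonneg : ∀ᵐ ω ∂ℙ, 0 ≤ Lam ω := hLpos.mono fun ω h => h.le
  have hlinN : ∫⁻ ω, (N ω : ℝ≥0∞) ∂ℙ = ∑' k : ℕ, (k : ℝ≥0∞) * ℙ {ω | N ω = k} := by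
    rw [← lintegral_map (measurable_of_countable _) hN, lintegral_countable']
    congr with n
    rw [Measure.map_apply hN (measurableSet_singleton n)]
    rfl
  have hmeas_eq : ∀ k : ℕ, ℙ {ω | N ω = k} = ENNReal.ofReal (∫ ω, fk k ω ∂ℙ) := fun k => by
    rw [← hmp k, ENNReal.ofReal_toReal (measure_ne_top _ _)]
  have hterm : ∀ k : ℕ, (k : ℝ≥0∞) * ℙ {ω | N ω = k}
      = ∫⁻ ω, ENNReal.ofReal ((k : ℝ) * fk k ω) ∂ℙ := by
    intro k
    rw [hmeas_eq k, ofReal_integral_eq_lintegral_ofReal (hfk_int k) (hfk_nonneg k),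
      ← lintegral_const_mul _ (hfk_meas k).ennreal_ofReal]
    refine lintegral_congr fun ω => ?_
    rw [ENNReal.ofReal_mul (by positivity), ENNReal.ofReal_natCast]
  have hlinL : ∫⁻ ω, (N ω : ℝ≥0∞) ∂ℙ = ENNReal.ofReal (∫ ω, Lam ω ∂ℙ) := by
    rw [hlinN]
    calc ∑' k : ℕ, (k : ℝ≥0∞) * ℙ {ω | N ω = k}
        = ∑' k : ℕ, ∫⁻ ω, ENNReal.ofReal ((k : ℝ) * fk k ω) ∂ℙ := by
          exact tsum_congr hterm
      _ = ∫⁻ ω, ∑' k : ℕ, ENNReal.ofReal ((k : ℝ) * fk k ω) ∂ℙ := by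
          exact (lintegral_tsum fun k =>
            (((hfk_meas k).const_mul (k:ℝ)).ennreal_ofReal).aemeasurable).symm
      _ = ∫⁻ ω, ENNReal.ofReal (Lam ω) ∂ℙ := by
          refine lintegral_congr_ae (hLpos.mono fun ω hω => ?_)
          simp only [hfk]
          rw [← ENNReal.ofReal_tsum_of_nonneg (fun k => by positivity)
            (hasSum_mul_pois (Lam ω)).summable, (hasSum_mul_pois (Lam ω)).tsum_eq]
      _ = ENNReal.ofReal (∫ ω, Lam ω ∂ℙ) := by
          exact (ofReal_integral_eq_lintegral_ofReal hΛint hL_nonneg).symm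
  have hNint : Integrable (fun ω => (N ω : ℝ)) ℙ := by
    refine ⟨hNcast.aestronglyMeasurable, ?_⟩
    rw [hasFiniteIntegral_iff_ofReal (Filter.Eventually.of_forall fun ω => by positivity)]
    simp_rw [ENNReal.ofReal_natCast]
    rw [hlinL]
    exact ENNReal.ofReal_lt_top
  have hEN : ∫ ω, (N ω : ℝ) ∂ℙ = ∫ ω, Lam ω ∂ℙ := by
    rw [integral_eq_lintegral_of_nonneg_ae
      (Filter.Eventually.of_forall fun ω => by positivity) hNcast.aestronglyMeasurable]
    simp_rw [ENNReal.ofReal_natCast]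
    rw [hlinL, ENNReal.toReal_ofReal (integral_nonneg_of_ae hL_nonneg)]
  -- Step 2 : Lams ≥ 0 a.s.
  have hLams_nonneg : ∀ᵐ ω ∂ℙ, 0 ≤ Lams ω := by
    set g : ℝ → ℝ := Set.indicator (Set.Iio (0:ℝ)) (fun _ => 1) with hg
    have hgmeas : Measurable g := measurable_const.indicator measurableSet_Iio
    have hgcomp : (fun ω => g (Lams ω)) = Set.indicator {ω | Lams ω < 0} (fun _ => (1:ℝ)) := by
      ext ω
      simp only [hg, Set.indicator_apply, Set.mem_Iio, Set.mem_setOf_eq]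
    have hset : MeasurableSet {ω | Lams ω < 0} := hLams measurableSet_Iio
    have hgint : Integrable (fun ω => g (Lams ω)) ℙ := by
      rw [hgcomp]; exact (integrable_const 1).indicator hset
    have hzero : (fun ω => Lam ω * g (Lam ω)) =ᵐ[ℙ] (fun _ => (0:ℝ)) := by
      filter_upwards [hLpos] with ω hω
      simp [hg, Set.indicator_apply, not_lt.mpr hω.le]
    have hLgint : Integrable (fun ω => Lam ω * g (Lam ω)) ℙ :=
      (integrable_const (0:ℝ)).congr hzero.symm
    have h := hLsize g hgmeas hgint hLgint
    rw [integral_congr_ae hzero] at h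
    simp only [integral_const, smul_eq_mul, mul_zero, zero_div] at h
    rw [hgcomp, integral_indicator_const (1:ℝ) hset] at h
    simp only [smul_eq_mul, mul_one] at h
    have : ℙ {ω | Lams ω < 0} = 0 :=
      (ENNReal.toReal_eq_zero_iff _).mp h |>.resolve_right (measure_ne_top _ _)
    rw [ae_iff]
    simpa [not_le] using this
  -- Step 3 : the main computation for each k
  intro k
  -- truncated test function
  set g0 : ℝ → ℝ := fun x => Real.exp (-|x|) * |x| ^ k / (Nat.factorial k) with hg0
  have hg0meas : Measurable g0 :=
    ((measurable_norm.neg.exp.mul (measurable_norm.pow_const k)).div_const _)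
  have hg0nonneg : ∀ x, 0 ≤ g0 x := fun x => by positivity
  have hg0le : ∀ x, g0 x ≤ 1 := fun x => pois_le_one _ (abs_nonneg x) k
  have hg0int : Integrable (fun ω => g0 (Lams ω)) ℙ := by
    refine Integrable.mono' (integrable_const 1) (hg0meas.comp hLams).aestronglyMeasurable ?_
    exact Filter.Eventually.of_forall fun ω => by
      rw [Real.norm_eq_abs, abs_of_nonneg (hg0nonneg _)]; exact hg0le _
  have hLg0int : Integrable (fun ω => Lam ω * g0 (Lam ω)) ℙ := by
    refine Integrable.mono' hΛint.abs
      (hLam.mul (hg0meas.comp hLam)).aestronglyMeasurable ?_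
    refine Filter.Eventually.of_forall fun ω => ?_
    rw [Real.norm_eq_abs, abs_mul]
    calc |Lam ω| * |g0 (Lam ω)| ≤ |Lam ω| * 1 := by
          refine mul_le_mul_of_nonneg_left ?_ (abs_nonneg _)
          rw [abs_of_nonneg (hg0nonneg _)]; exact hg0le _
      _ = |Lam ω| := mul_one _
  have hsize := hLsize g0 hg0meas hg0int hLg0int
  -- RHS = ∫ g0 (Lams)
  have hRHS : ∫ ω, Real.exp (-Lams ω) * Lams ω ^ k / (Nat.factorial k) ∂ℙ
      = ∫ ω, g0 (Lams ω) ∂ℙ := by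
    refine integral_congr_ae (hLams_nonneg.mono fun ω hω => ?_)
    simp [hg0, abs_of_nonneg hω]
  -- numerator identification
  have hfac : ((k+1).factorial : ℝ) = ((k:ℝ)+1) * k.factorial := by
    rw [Nat.factorial_succ]; push_cast; ring
  have hnum : ∫ ω, Lam ω * g0 (Lam ω) ∂ℙ = ((k:ℝ)+1) * ∫ ω, fk (k+1) ω ∂ℙ := by
    rw [← integral_const_mul]
    refine integral_congr_ae (hLpos.mono fun ω hω => ?_)
    simp only [hg0, hfk, abs_of_pos hω]
    have h1 : ((k:ℝ)+1) ≠ 0 := by positivity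
    have h2 : (k.factorial : ℝ) ≠ 0 := by positivity
    rw [hfac]
    field_simp
    ring
  -- LHS reduction to Ns = k+1
  have hNs0 : ℙ {ω | Ns ω = 0} = 0 := by
    have h0 := hNsize 0
    simp only [Nat.cast_zero, zero_mul, zero_div] at h0
    exact (ENNReal.toReal_eq_zero_iff _).mp h0 |>.resolve_right (measure_ne_top _ _)
  have hLHS : ℙ {ω | Ns ω - 1 = k} = ℙ {ω | Ns ω = k + 1} := by
    have hseteq : {ω | Ns ω - 1 = k} = {ω | Ns ω = 0 ∧ k = 0} ∪ {ω | Ns ω = k + 1} := by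
      ext ω; simp only [Set.mem_setOf_eq, Set.mem_union]; omega
    have hA : ℙ {ω | Ns ω = 0 ∧ k = 0} = 0 :=
      measure_mono_null (fun ω h => h.1) hNs0
    rw [hseteq]
    refine le_antisymm ((measure_union_le _ _).trans ?_) (measure_mono Set.subset_union_right)
    rw [hA, zero_add]
  rw [congrArg ENNReal.toReal hLHS, hNsize (k+1), hmp (k+1), hEN, hRHS, hsize, hnum]
  congr 1
  push_cast
  rfl
end

section
/- If Λ is a positive random variable with finite second moment and N ∼ Po(Λ), then with N^s the size-biased version of N, under any coupling where N^s is stochastically larger than N + 1 (which exists), E|N + 1 - N^s| = E[N^s - N - 1] = Var(Λ)/E[Λ]. -/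
open MeasureTheory ProbabilityTheory

lemma exp_tsum (x : ℝ) : ∑' k : ℕ, x ^ k / k.factorial = Real.exp x := by
  rw [Real.exp_eq_exp_ℝ, NormedSpace.exp_eq_tsum_div]

lemma summable1 (x : ℝ) : Summable (fun k : ℕ => (k:ℝ) * (x ^ k / k.factorial)) := by
  rw [← summable_nat_add_iff 1]
  have h : ∀ k : ℕ, ((k+1:ℕ):ℝ) * (x ^ (k+1) / (k+1).factorial)
      = x * (x ^ k / k.factorial) := by
    intro k
    rw [Nat.factorial_succ]
    push_cast
    have h1 : ((k:ℝ)+1) ≠ 0 := by positivity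
    field_simp
    ring
  exact ((Real.summable_pow_div_factorial x).mul_left x).congr (fun k => (h k).symm)

lemma sum1 (x : ℝ) : ∑' k : ℕ, (k:ℝ) * (x ^ k / k.factorial) = x * Real.exp x := by
  rw [Summable.tsum_eq_zero_add (summable1 x)]
  have h : ∀ k : ℕ, ((k+1:ℕ):ℝ) * (x ^ (k+1) / (k+1).factorial)
      = x * (x ^ k / k.factorial) := by
    intro k
    rw [Nat.factorial_succ]
    push_cast
    have h1 : ((k:ℝ)+1) ≠ 0 := by positivity
    field_simp
    ring
  simp only [h]
  rw [tsum_mul_left, exp_tsum]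
  simp

lemma summable2 (x : ℝ) : Summable (fun k : ℕ => (k:ℝ)^2 * (x ^ k / k.factorial)) := by
  rw [← summable_nat_add_iff 1]
  have h : ∀ k : ℕ, ((k+1:ℕ):ℝ)^2 * (x ^ (k+1) / (k+1).factorial)
      = x * ((k:ℝ) * (x ^ k / k.factorial)) + x * (x ^ k / k.factorial) := by
    intro k
    rw [Nat.factorial_succ]
    push_cast
    have h1 : ((k:ℝ)+1) ≠ 0 := by positivity
    field_simp
    ring
  exact (((summable1 x).mul_left x).add ((Real.summable_pow_div_factorial x).mul_left x)).congr (fun k => (h k).symm)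

lemma sum2 (x : ℝ) : ∑' k : ℕ, (k:ℝ)^2 * (x ^ k / k.factorial) = (x^2 + x) * Real.exp x := by
  rw [Summable.tsum_eq_zero_add (summable2 x)]
  have h : ∀ k : ℕ, ((k+1:ℕ):ℝ)^2 * (x ^ (k+1) / (k+1).factorial)
      = x * ((k:ℝ) * (x ^ k / k.factorial)) + x * (x ^ k / k.factorial) := by
    intro k
    rw [Nat.factorial_succ]
    push_cast
    have h1 : ((k:ℝ)+1) ≠ 0 := by positivity
    field_simp
    ring
  simp only [h]
  rw [Summable.tsum_add (((summable1 x)).mul_left x) ((Real.summable_pow_div_factorial x).mul_left x),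
    tsum_mul_left, tsum_mul_left, sum1, exp_tsum]
  ring

lemma rsum1 (x : ℝ) : ∑' k : ℕ, (k:ℝ) * (Real.exp (-x) * x ^ k / k.factorial) = x := by
  have h : ∀ k : ℕ, (k:ℝ) * (Real.exp (-x) * x ^ k / k.factorial)
      = Real.exp (-x) * ((k:ℝ) * (x ^ k / k.factorial)) := fun k => by ring
  simp only [h]
  rw [tsum_mul_left, sum1, ← mul_assoc, mul_comm (Real.exp (-x)) x, mul_assoc, ← Real.exp_add]
  simp

lemma rsummable1 (x : ℝ) : Summable (fun k : ℕ => (k:ℝ) * (Real.exp (-x) * x ^ k / k.factorial)) := by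
  exact ((summable1 x).mul_left (Real.exp (-x))).congr (fun k => by ring)

lemma rsum2 (x : ℝ) : ∑' k : ℕ, (k:ℝ)^2 * (Real.exp (-x) * x ^ k / k.factorial) = x^2 + x := by
  have h : ∀ k : ℕ, (k:ℝ)^2 * (Real.exp (-x) * x ^ k / k.factorial)
      = Real.exp (-x) * ((k:ℝ)^2 * (x ^ k / k.factorial)) := fun k => by ring
  simp only [h]
  rw [tsum_mul_left, sum2, ← mul_assoc, mul_comm (Real.exp (-x)), mul_assoc, ← Real.exp_add]
  simp

lemma rsummable2 (x : ℝ) : Summable (fun k : ℕ => (k:ℝ)^2 * (Real.exp (-x) * x ^ k / k.factorial)) := by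
  exact ((summable2 x).mul_left (Real.exp (-x))).congr (fun k => by ring)

lemma pois1 (x : ℝ) (hx : 0 ≤ x) :
    ∑' k : ℕ, ENNReal.ofReal ((k:ℝ) * (Real.exp (-x) * x ^ k / k.factorial))
      = ENNReal.ofReal x := by
  rw [← ENNReal.ofReal_tsum_of_nonneg (fun k => by positivity) (rsummable1 x), rsum1]

lemma pois2 (x : ℝ) (hx : 0 ≤ x) :
    ∑' k : ℕ, ENNReal.ofReal ((k:ℝ)^2 * (Real.exp (-x) * x ^ k / k.factorial))
      = ENNReal.ofReal (x^2 + x) := by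
  rw [← ENNReal.ofReal_tsum_of_nonneg (fun k => by positivity) (rsummable2 x), rsum2]

lemma lint_nat {Ω : Type*} [MeasurableSpace Ω] (μ : Measure Ω) (g : Ω → ℕ) (hg : Measurable g) :
    ∫⁻ ω, (g ω : ENNReal) ∂μ = ∑' k : ℕ, (k : ENNReal) * μ {ω | g ω = k} := by
  have : ∫⁻ ω, (g ω : ENNReal) ∂μ = ∫⁻ n, (n : ENNReal) ∂(μ.map g) :=
    (lintegral_map measurable_from_top hg).symm
  rw [this, lintegral_countable']
  congr 1
  funext k
  rw [Measure.map_apply hg (measurableSet_singleton k)]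
  have hset : g ⁻¹' {k} = {ω | g ω = k} := by ext ω; simp
  rw [hset, mul_comm]

/-- For a mixed Poisson `N ∼ Po(Λ)`, under any coupling in which `N^s` dominates `N + 1`,
`E|N + 1 - N^s| = E[N^s - N - 1] = Var(Λ)/E[Λ]`. -/
theorem sizeBiased_mixedPoisson_coupling
    {Ω : Type*} [MeasureSpace Ω] [IsProbabilityMeasure (ℙ : Measure Ω)]
    (Lam : Ω → ℝ) (hLam : Measurable Lam)
    (hLpos : ∀ᵐ ω ∂ℙ, 0 < Lam ω) (hL2 : MemLp Lam 2 ℙ)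
    (N Ns : Ω → ℕ) (hN : Measurable N) (hNs : Measurable Ns)
    (hNsint : Integrable (fun ω => (Ns ω : ℝ)) ℙ)
    (hmp : ∀ k : ℕ, (ℙ {ω | N ω = k}).toReal
      = ∫ ω, Real.exp (-Lam ω) * Lam ω ^ k / (Nat.factorial k) ∂ℙ)
    (hNsize : ∀ j : ℕ, (ℙ {ω | Ns ω = j}).toReal
      = j * (ℙ {ω | N ω = j}).toReal / ∫ ω, (N ω : ℝ) ∂ℙ)
    (hdom : ∀ᵐ ω ∂ℙ, N ω + 1 ≤ Ns ω) :
    (∫ ω, |(N ω : ℝ) + 1 - (Ns ω : ℝ)| ∂ℙ = variance Lam ℙ / ∫ ω, Lam ω ∂ℙ)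
    ∧ (∫ ω, ((Ns ω : ℝ) - (N ω : ℝ) - 1) ∂ℙ = variance Lam ℙ / ∫ ω, Lam ω ∂ℙ) := by
  have hLnn : 0 ≤ᵐ[ℙ] Lam := hLpos.mono fun ω h => h.le
  have hLint : Integrable Lam ℙ := hL2.integrable one_le_two
  have hLsq : Integrable (fun ω => Lam ω ^ 2) ℙ := hL2.integrable_sq
  set E1 := ∫ ω, Lam ω ∂ℙ with hE1def
  set E2 := ∫ ω, Lam ω ^ 2 ∂ℙ with hE2def
  have hE2nn : 0 ≤ E2 := integral_nonneg fun ω => sq_nonneg _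
  have hE1pos : 0 < E1 := by
    rw [hE1def, integral_pos_iff_support_of_nonneg_ae hLnn hLint]
    by_contra h
    have h0 : ℙ (Function.support Lam) = 0 := le_antisymm (by simpa using h) (by simp)
    have hz : ∀ᵐ ω ∂ℙ, Lam ω = 0 := by
      rw [ae_iff]
      convert h0 using 2
      rfl
    obtain ⟨ω, h1, h2⟩ := (hLpos.and hz).exists
    linarith
  have hE1ne : E1 ≠ 0 := hE1pos.ne'
  have hpmfm : ∀ k : ℕ, Measurable fun ω => Real.exp (-Lam ω) * Lam ω ^ k / (Nat.factorial k : ℝ) :=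
    fun k => ((Real.measurable_exp.comp hLam.neg).mul (hLam.pow_const k)).div_const _
  -- first moment
  set L : ℕ → ENNReal := fun k =>
    ∫⁻ ω, ENNReal.ofReal ((k:ℝ) * (Real.exp (-Lam ω) * Lam ω ^ k / (Nat.factorial k))) ∂ℙ with hLdef
  have hfm : ∀ k : ℕ, Measurable fun ω =>
      ENNReal.ofReal ((k:ℝ) * (Real.exp (-Lam ω) * Lam ω ^ k / (Nat.factorial k))) :=
    fun k => ((hpmfm k).const_mul _).ennreal_ofReal
  have hLsum : ∑' k, L k = ENNReal.ofReal E1 := by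
    rw [hLdef, ← lintegral_tsum fun k => (hfm k).aemeasurable]
    have hpt : ∀ᵐ ω ∂ℙ, (∑' k : ℕ, ENNReal.ofReal
        ((k:ℝ) * (Real.exp (-Lam ω) * Lam ω ^ k / (Nat.factorial k)))) = ENNReal.ofReal (Lam ω) :=
      hLpos.mono fun ω h => pois1 _ h.le
    rw [lintegral_congr_ae hpt, ← ofReal_integral_eq_lintegral_ofReal hLint hLnn]
  have hLne : ∀ k, L k ≠ ⊤ := by
    intro k
    have h1 : L k ≤ ∑' k, L k := ENNReal.le_tsum k
    rw [hLsum] at h1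
    exact ne_top_of_le_ne_top ENNReal.ofReal_ne_top h1
  have hA : ∀ k : ℕ, (k : ENNReal) * ℙ {ω | N ω = k} = L k := by
    intro k
    have h1 : ∫ ω, (k:ℝ) * (Real.exp (-Lam ω) * Lam ω ^ k / (Nat.factorial k)) ∂ℙ
        = (L k).toReal := by
      rw [integral_eq_lintegral_of_nonneg_ae (hLpos.mono fun ω h => by positivity)
        (((hpmfm k).const_mul ((k:ℝ))).aestronglyMeasurable)]
    calc (k : ENNReal) * ℙ {ω | N ω = k}
        = ENNReal.ofReal ((k:ℝ) * (ℙ {ω | N ω = k}).toReal) := by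
          rw [ENNReal.ofReal_mul (Nat.cast_nonneg k), ENNReal.ofReal_natCast,
            ENNReal.ofReal_toReal (measure_ne_top _ _)]
      _ = ENNReal.ofReal ((L k).toReal) := by rw [hmp k, ← integral_const_mul, h1]
      _ = L k := ENNReal.ofReal_toReal (hLne k)
  have hNlint : ∫⁻ ω, (N ω : ENNReal) ∂ℙ = ENNReal.ofReal E1 := by
    rw [lint_nat ℙ N hN, tsum_congr hA, hLsum]
  have hNint_eq : ∫ ω, (N ω : ℝ) ∂ℙ = E1 := by
    rw [integral_eq_lintegral_of_nonneg_ae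
      (Filter.Eventually.of_forall fun ω => Nat.cast_nonneg (N ω))
      ((show Measurable fun ω => ((N ω : ℝ)) by exact measurable_from_top.comp hN).aestronglyMeasurable)]
    have : ∫⁻ ω, ENNReal.ofReal ((N ω : ℝ)) ∂ℙ = ∫⁻ ω, (N ω : ENNReal) ∂ℙ :=
      lintegral_congr fun ω => ENNReal.ofReal_natCast _
    rw [this, hNlint, ENNReal.toReal_ofReal hE1pos.le]
  -- second moment
  have hSint : Integrable (fun ω => Lam ω ^ 2 + Lam ω) ℙ := hLsq.add hLint
  have hSnn : 0 ≤ᵐ[ℙ] fun ω => Lam ω ^ 2 + Lam ω := hLpos.mono fun ω h => by positivity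
  set M : ℕ → ENNReal := fun j =>
    ∫⁻ ω, ENNReal.ofReal ((j:ℝ)^2 * (Real.exp (-Lam ω) * Lam ω ^ j / (Nat.factorial j))) ∂ℙ
    with hMdef
  have hgm : ∀ j : ℕ, Measurable fun ω =>
      ENNReal.ofReal ((j:ℝ)^2 * (Real.exp (-Lam ω) * Lam ω ^ j / (Nat.factorial j))) :=
    fun j => ((hpmfm j).const_mul _).ennreal_ofReal
  have hMsum : ∑' j, M j = ENNReal.ofReal (E2 + E1) := by
    rw [hMdef, ← lintegral_tsum fun j => (hgm j).aemeasurable]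
    have hpt : ∀ᵐ ω ∂ℙ, (∑' j : ℕ, ENNReal.ofReal
        ((j:ℝ)^2 * (Real.exp (-Lam ω) * Lam ω ^ j / (Nat.factorial j))))
        = ENNReal.ofReal (Lam ω ^ 2 + Lam ω) :=
      hLpos.mono fun ω h => pois2 _ h.le
    rw [lintegral_congr_ae hpt, ← ofReal_integral_eq_lintegral_ofReal hSint hSnn,
      integral_add hLsq hLint]
  have hMne : ∀ j, M j ≠ ⊤ := by
    intro j
    have h1 : M j ≤ ∑' j, M j := ENNReal.le_tsum j
    rw [hMsum] at h1
    exact ne_top_of_le_ne_top ENNReal.ofReal_ne_top h1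
  have hB : ∀ j : ℕ, (j : ENNReal) * ℙ {ω | Ns ω = j}
      = ENNReal.ofReal (1 / E1) * M j := by
    intro j
    have h1 : ∫ ω, (j:ℝ)^2 * (Real.exp (-Lam ω) * Lam ω ^ j / (Nat.factorial j)) ∂ℙ
        = (M j).toReal := by
      rw [integral_eq_lintegral_of_nonneg_ae (hLpos.mono fun ω h => by positivity)
        (((hpmfm j).const_mul ((j:ℝ)^2)).aestronglyMeasurable)]
    have h2 : (j:ℝ)^2 * (ℙ {ω | N ω = j}).toReal = (M j).toReal := by
      rw [hmp j, ← integral_const_mul, h1]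
    calc (j : ENNReal) * ℙ {ω | Ns ω = j}
        = ENNReal.ofReal ((j:ℝ) * (ℙ {ω | Ns ω = j}).toReal) := by
          rw [ENNReal.ofReal_mul (Nat.cast_nonneg j), ENNReal.ofReal_natCast,
            ENNReal.ofReal_toReal (measure_ne_top _ _)]
      _ = ENNReal.ofReal ((1 / E1) * ((j:ℝ)^2 * (ℙ {ω | N ω = j}).toReal)) := by
          rw [hNsize j, hNint_eq]
          congr 1
          field_simp
      _ = ENNReal.ofReal (1 / E1) * ENNReal.ofReal ((j:ℝ)^2 * (ℙ {ω | N ω = j}).toReal) :=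
          ENNReal.ofReal_mul (by positivity)
      _ = ENNReal.ofReal (1 / E1) * M j := by rw [h2, ENNReal.ofReal_toReal (hMne j)]
  have hNslint : ∫⁻ ω, (Ns ω : ENNReal) ∂ℙ = ENNReal.ofReal ((E2 + E1) / E1) := by
    rw [lint_nat ℙ Ns hNs, tsum_congr hB, ENNReal.tsum_mul_left, hMsum,
      ← ENNReal.ofReal_mul (by positivity), one_div, inv_mul_eq_div]
  have hNsint_eq : ∫ ω, (Ns ω : ℝ) ∂ℙ = (E2 + E1) / E1 := by
    rw [integral_eq_lintegral_of_nonneg_ae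
      (Filter.Eventually.of_forall fun ω => Nat.cast_nonneg (Ns ω))
      ((show Measurable fun ω => ((Ns ω : ℝ)) by exact measurable_from_top.comp hNs).aestronglyMeasurable)]
    have : ∫⁻ ω, ENNReal.ofReal ((Ns ω : ℝ)) ∂ℙ = ∫⁻ ω, (Ns ω : ENNReal) ∂ℙ :=
      lintegral_congr fun ω => ENNReal.ofReal_natCast _
    rw [this, hNslint, ENNReal.toReal_ofReal (by positivity)]
  -- conclusion
  have hNint : Integrable (fun ω => (N ω : ℝ)) ℙ := by
    refine hNsint.mono
      ((show Measurable fun ω => ((N ω : ℝ)) by exact measurable_from_top.comp hN).aestronglyMeasurable)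
      (hdom.mono fun ω h => ?_)
    have h1 : (N ω : ℝ) ≤ (Ns ω : ℝ) := by exact_mod_cast le_trans (Nat.le_succ _) h
    rw [Real.norm_eq_abs, Real.norm_eq_abs, abs_of_nonneg (by positivity),
      abs_of_nonneg (by positivity)]
    exact h1
  have hvar : variance Lam ℙ = E2 - E1 ^ 2 := by
    rw [variance_eq_sub hL2]
    rfl
  have hdiff : Integrable (fun ω => (Ns ω : ℝ) - (N ω : ℝ)) ℙ := hNsint.sub hNint
  have hsecond : ∫ ω, ((Ns ω : ℝ) - (N ω : ℝ) - 1) ∂ℙ = variance Lam ℙ / E1 := by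
    rw [integral_sub hdiff (integrable_const 1), integral_sub hNsint hNint,
      integral_const, hNsint_eq, hNint_eq, hvar]
    simp only [measure_univ, probReal_univ, ENNReal.toReal_one, smul_eq_mul, one_mul]
    field_simp
    ring
  refine ⟨?_, hsecond⟩
  rw [← hsecond]
  refine integral_congr_ae (hdom.mono fun ω h => ?_)
  have h1 : (N ω : ℝ) + 1 ≤ (Ns ω : ℝ) := by exact_mod_cast h
  show |(N ω : ℝ) + 1 - (Ns ω : ℝ)| = (Ns ω : ℝ) - (N ω : ℝ) - 1
  rw [abs_of_nonpos (by linarith)]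
  ring
end
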